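/- arXiv:2603.00322 — 2 statements merged into one kernel-verified Lean document; each statement's English description precedes it below -/
import Mathlib

section
/- For all real d×d positive semidefinite matrices A and B, Tr[(A^{1/2} B A^{1/2})^{1/2}] ≤ (Tr A + Tr B)/2; equivalently, the squared Bures distance d_B²(A,B) = Tr[A + B − 2 (A^{1/2} B A^{1/2})^{1/2}] is nonnegative. -/
open MeasureTheory ProbabilityTheory Matrix
open scoped Classical

/-- The unique positive semidefinite square root of a positive semidefinite real matrix
(junk value `0` if the matrix is not positive semidefinite). -/
noncomputable def psdSqrt {d : ℕ} (M : Matrix (Fin d) (Fin d) ℝ) : Matrix (Fin d) (Fin d) ℝ :=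
  if h : M.PosSemidef then
    h.1.eigenvectorUnitary.1 * diagonal ((↑) ∘ (√·) ∘ h.1.eigenvalues) *
      (star h.1.eigenvectorUnitary : Matrix (Fin d) (Fin d) ℝ)
  else 0

/-- The squared Bures distance `Tr[A + B − 2 (A^{1/2} B A^{1/2})^{1/2}]`. -/
noncomputable def buresSq {d : ℕ} (A B : Matrix (Fin d) (Fin d) ℝ) : ℝ :=
  (A + B - 2 • psdSqrt (psdSqrt A * B * psdSqrt A)).trace

lemma psdSqrt_spec {d : ℕ} {M : Matrix (Fin d) (Fin d) ℝ} (hM : M.PosSemidef) :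
    (psdSqrt M)ᴴ = psdSqrt M ∧ psdSqrt M * psdSqrt M = M ∧ (psdSqrt M).PosSemidef := by
  have hP : (psdSqrt M).PosSemidef := by
    rw [psdSqrt, dif_pos hM, Matrix.star_eq_conjTranspose]
    apply PosSemidef.mul_mul_conjTranspose_same
    exact posSemidef_diagonal_iff.2 fun i => by simp [Real.sqrt_nonneg]
  refine ⟨hP.1.eq, ?_, hP⟩
  rw [psdSqrt, dif_pos hM]
  have hU := Unitary.coe_star_mul_self hM.1.eigenvectorUnitary
  calc _ = hM.1.eigenvectorUnitary.1 * (diagonal ((↑) ∘ (√·) ∘ hM.1.eigenvalues) *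
        ((star hM.1.eigenvectorUnitary : Matrix (Fin d) (Fin d) ℝ) * hM.1.eigenvectorUnitary.1) *
        diagonal ((↑) ∘ (√·) ∘ hM.1.eigenvalues)) *
        (star hM.1.eigenvectorUnitary : Matrix (Fin d) (Fin d) ℝ) := by simp only [mul_assoc]
    _ = hM.1.eigenvectorUnitary.1 * diagonal (RCLike.ofReal ∘ hM.1.eigenvalues) *
        (star hM.1.eigenvectorUnitary : Matrix (Fin d) (Fin d) ℝ) := by
      rw [hU, mul_one, diagonal_mul_diagonal]
      congr 3
      funext i
      simp [Real.mul_self_sqrt (hM.eigenvalues_nonneg i)]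
    _ = M := by
      conv_rhs => rw [hM.1.spectral_theorem]
      simp

lemma psd_trace_nonneg {d : ℕ} {M : Matrix (Fin d) (Fin d) ℝ} (hM : M.PosSemidef) :
    0 ≤ M.trace := by
  rw [Matrix.trace]
  refine Finset.sum_nonneg fun i _ => ?_
  simpa [Matrix.diag] using hM.2 (Finsupp.single i 1)

lemma psd_trace_mul_nonneg {d : ℕ} {M N : Matrix (Fin d) (Fin d) ℝ}
    (hM : M.PosSemidef) (hN : N.PosSemidef) : 0 ≤ (M * N).trace := by
  obtain ⟨T, hTH, hTT⟩ : ∃ T : Matrix (Fin d) (Fin d) ℝ, Tᴴ = T ∧ T * T = M :=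
    ⟨psdSqrt M, (psdSqrt_spec hM).1, (psdSqrt_spec hM).2.1⟩
  have h2 : (T * N * T).PosSemidef := by
    have := hN.mul_mul_conjTranspose_same T
    rwa [hTH] at this
  calc (0:ℝ) ≤ (T * N * T).trace := psd_trace_nonneg h2
    _ = (T * (T * N)).trace := by rw [Matrix.trace_mul_comm]
    _ = (M * N).trace := by rw [← mul_assoc, hTT]

/-- for PSD matrices `A, B`,
`Tr[(A^{1/2} B A^{1/2})^{1/2}] ≤ (Tr A + Tr B)/2`; equivalently `d_B²(A,B) ≥ 0`. -/
theorem stmt1 (d : ℕ) (A B : Matrix (Fin d) (Fin d) ℝ)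
    (hA : A.PosSemidef) (hB : B.PosSemidef) :
    (psdSqrt (psdSqrt A * B * psdSqrt A)).trace ≤ (A.trace + B.trace) / 2 ∧
    0 ≤ buresSq A B := by
  -- abstract square roots of A and B
  obtain ⟨X, hXH, hXX, hpsdA⟩ :
      ∃ X : Matrix (Fin d) (Fin d) ℝ, Xᴴ = X ∧ X * X = A ∧ psdSqrt A = X :=
    ⟨psdSqrt A, (psdSqrt_spec hA).1, (psdSqrt_spec hA).2.1, rfl⟩
  obtain ⟨Y, hYH, hYY⟩ : ∃ Y : Matrix (Fin d) (Fin d) ℝ, Yᴴ = Y ∧ Y * Y = B :=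
    ⟨psdSqrt B, (psdSqrt_spec hB).1, (psdSqrt_spec hB).2.1⟩
  have hC : (X * B * X).PosSemidef := by
    have := hB.mul_mul_conjTranspose_same X
    rwa [hXH] at this
  -- abstract square root of X * B * X and its spectral data
  obtain ⟨S, hSS, hSpsd, hpsdC⟩ :
      ∃ S : Matrix (Fin d) (Fin d) ℝ, S * S = X * (Y * Y) * X ∧ S.PosSemidef ∧
        psdSqrt (psdSqrt A * B * psdSqrt A) = S := by
    refine ⟨psdSqrt (X * B * X), ?_, (psdSqrt_spec hC).2.2, by rw [hpsdA]⟩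
    rw [(psdSqrt_spec hC).2.1, hYY]
  obtain ⟨V, W, μ, hVsV, hVH, hWH, hSpec⟩ :
      ∃ (V W : Matrix (Fin d) (Fin d) ℝ) (μ : Fin d → ℝ),
        W * V = 1 ∧ Vᴴ = W ∧ Wᴴ = V ∧ S = V * diagonal μ * W := by
    refine ⟨hSpsd.1.eigenvectorUnitary, star (hSpsd.1.eigenvectorUnitary : Matrix (Fin d) (Fin d) ℝ),
      hSpsd.1.eigenvalues, ?_, ?_, ?_, ?_⟩
    · exact Unitary.coe_star_mul_self hSpsd.1.eigenvectorUnitary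
    · exact (Matrix.star_eq_conjTranspose _).symm
    · rw [← Matrix.star_eq_conjTranspose, star_star]
    · exact hSpsd.1.spectral_theorem
  -- conjugation product helper
  have key : ∀ a b : Fin d → ℝ,
      (V * diagonal a * W) * (V * diagonal b * W)
        = V * diagonal (fun i => a i * b i) * W := by
    intro a b
    calc (V * diagonal a * W) * (V * diagonal b * W)
        = V * (diagonal a * (W * V) * diagonal b) * W := by
          simp only [mul_assoc]
      _ = V * (diagonal a * diagonal b) * W := by rw [hVsV, mul_one]
      _ = V * diagonal (fun i => a i * b i) * W := by
          rw [diagonal_mul_diagonal]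
  have hconjH : ∀ a : Fin d → ℝ, (V * diagonal a * W)ᴴ = V * diagonal a * W := by
    intro a
    rw [conjTranspose_mul, conjTranspose_mul, hWH, hVH, diagonal_conjTranspose]
    rw [show star a = a from rfl, ← mul_assoc]
  -- pseudo-inverse of S and range projection
  obtain ⟨r, hrdef⟩ : ∃ r : Fin d → ℝ, r = fun i => if μ i = 0 then 0 else (μ i)⁻¹ := ⟨_, rfl⟩
  obtain ⟨p, hpdef⟩ : ∃ p : Fin d → ℝ, p = fun i => if μ i = 0 then 0 else 1 := ⟨_, rfl⟩
  obtain ⟨R, hRdef⟩ : ∃ R : Matrix (Fin d) (Fin d) ℝ, R = V * diagonal r * W := ⟨_, rfl⟩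
  obtain ⟨P, hPdef⟩ : ∃ P : Matrix (Fin d) (Fin d) ℝ, P = V * diagonal p * W := ⟨_, rfl⟩
  have hrμ : (fun i => r i * μ i) = p := by
    funext i; by_cases h : μ i = 0 <;> simp [hrdef, hpdef, h, inv_mul_cancel₀]
  have hμr : (fun i => μ i * r i) = p := by
    funext i; by_cases h : μ i = 0 <;> simp [hrdef, hpdef, h, mul_inv_cancel₀]
  have hpμ : (fun i => p i * μ i) = μ := by
    funext i; by_cases h : μ i = 0 <;> simp [hpdef, h]
  have hμp : (fun i => μ i * p i) = μ := by
    funext i; by_cases h : μ i = 0 <;> simp [hpdef, h]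
  have hrp : (fun i => r i * p i) = r := by
    funext i; by_cases h : μ i = 0 <;> simp [hrdef, hpdef, h]
  have hRS : R * S = P := by rw [hSpec, hRdef, hPdef, key, hrμ]
  have hSR : S * R = P := by rw [hSpec, hRdef, hPdef, key, hμr]
  have hPS : P * S = S := by
    conv_lhs => rw [hSpec, hPdef, key, hpμ]
    rw [hSpec]
  have hSP : S * P = S := by
    conv_lhs => rw [hSpec, hPdef, key, hμp]
    rw [hSpec]
  have hRP : R * P = R := by
    conv_lhs => rw [hRdef, hPdef, key, hrp]
    rw [hRdef]
  have hRH : Rᴴ = R := by rw [hRdef]; exact hconjH r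
  have hRC : R * (S * S) = S := by rw [← mul_assoc, hRS, hPS]
  -- the partial isometry Z
  obtain ⟨Z, hZdef⟩ : ∃ Z : Matrix (Fin d) (Fin d) ℝ, Z = Y * X * R := ⟨_, rfl⟩
  have hZH : Zᴴ = R * (X * Y) := by
    rw [hZdef, conjTranspose_mul, hRH, conjTranspose_mul, hXH, hYH]
  have hZtZ : Zᴴ * Z = P := by
    calc Zᴴ * Z = (R * (X * Y)) * (Y * X * R) := by rw [hZH, hZdef]
      _ = R * (X * (Y * Y) * X) * R := by noncomm_ring
      _ = R * (S * S) * R := by rw [hSS]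
      _ = (P * S) * R := by rw [← hRS]; noncomm_ring
      _ = S * R := by rw [hPS]
      _ = P := hSR
  have hZP : Z * P = Z := by
    calc Z * P = Y * X * (R * P) := by rw [hZdef]; noncomm_ring
      _ = Z := by rw [hRP, hZdef, mul_assoc]
  -- Q := Z * Zᴴ is an orthogonal projection
  obtain ⟨Q, hQdef⟩ : ∃ Q : Matrix (Fin d) (Fin d) ℝ, Q = Z * Zᴴ := ⟨_, rfl⟩
  have hQH : Qᴴ = Q := by
    rw [hQdef, conjTranspose_mul, conjTranspose_conjTranspose]
  have hQQ : Q * Q = Q := by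
    calc Q * Q = Z * (Zᴴ * Z) * Zᴴ := by rw [hQdef]; noncomm_ring
      _ = (Z * P) * Zᴴ := by rw [hZtZ, mul_assoc]
      _ = Q := by rw [hZP, hQdef]
  have hIQ : ((1 : Matrix (Fin d) (Fin d) ℝ) - Q).PosSemidef := by
    have h1 : (1 : Matrix (Fin d) (Fin d) ℝ) - Q
        = ((1 : Matrix (Fin d) (Fin d) ℝ) - Q)ᴴ * ((1 : Matrix (Fin d) (Fin d) ℝ) - Q) := by
      rw [conjTranspose_sub, conjTranspose_one, hQH, mul_sub, sub_mul, sub_mul, hQQ]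
      noncomm_ring
    rw [h1]
    exact posSemidef_conjTranspose_mul_self _
  -- expansion of the nonnegative trace of Nᴴ N with N = X - Zᴴ Y
  obtain ⟨N, hNdef⟩ : ∃ N : Matrix (Fin d) (Fin d) ℝ, N = X - Zᴴ * Y := ⟨_, rfl⟩
  have hNH : Nᴴ = X - Y * Z := by
    rw [hNdef, conjTranspose_sub, hXH, conjTranspose_mul, hYH, conjTranspose_conjTranspose]
  have hexp : Nᴴ * N = X * X - X * (Zᴴ * Y) - Y * Z * X + Y * Z * (Zᴴ * Y) := by
    rw [hNH, hNdef]; noncomm_ring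
  have ht1 : (X * (Zᴴ * Y)).trace = S.trace := by
    have e1 : Zᴴ * Y * X = S := by
      calc Zᴴ * Y * X = R * (X * (Y * Y) * X) := by rw [hZH]; noncomm_ring
        _ = R * (S * S) := by rw [hSS]
        _ = S := hRC
    rw [Matrix.trace_mul_comm, e1]
  have ht2 : (Y * Z * X).trace = S.trace := by
    have e2 : X * (Y * Z) = S := by
      calc X * (Y * Z) = X * (Y * Y) * X * R := by rw [hZdef]; noncomm_ring
        _ = S * S * R := by rw [hSS]
        _ = S * P := by rw [mul_assoc, hSR]
        _ = S := hSP
    rw [Matrix.trace_mul_comm, e2]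
  have ht3 : (Y * Z * (Zᴴ * Y)).trace = (Q * B).trace := by
    have e3 : (Zᴴ * Y) * (Y * Z) = Zᴴ * (B * Z) := by
      rw [← hYY]; noncomm_ring
    calc (Y * Z * (Zᴴ * Y)).trace = ((Zᴴ * Y) * (Y * Z)).trace := Matrix.trace_mul_comm _ _
      _ = (Zᴴ * (B * Z)).trace := by rw [e3]
      _ = ((B * Z) * Zᴴ).trace := Matrix.trace_mul_comm _ _
      _ = (B * Q).trace := by rw [hQdef, mul_assoc]
      _ = (Q * B).trace := Matrix.trace_mul_comm _ _
  have hQB : (Q * B).trace ≤ B.trace := by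
    have h1 : 0 ≤ (((1 : Matrix (Fin d) (Fin d) ℝ) - Q) * B).trace :=
      psd_trace_mul_nonneg hIQ hB
    rw [sub_mul, one_mul, Matrix.trace_sub] at h1
    linarith
  have h0 : 0 ≤ (Nᴴ * N).trace := psd_trace_nonneg (posSemidef_conjTranspose_mul_self N)
  rw [hexp, Matrix.trace_add, Matrix.trace_sub, Matrix.trace_sub, ht1, ht2, ht3, hXX] at h0
  have hmain : S.trace ≤ (A.trace + B.trace) / 2 := by linarith
  refine ⟨by rw [hpsdC]; exact hmain, ?_⟩
  rw [buresSq, hpsdC, Matrix.trace_sub, Matrix.trace_add, Matrix.trace_smul]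
  simp only [nsmul_eq_mul, Nat.cast_ofNat]
  linarith
end

section
/- Let P and Q be Borel probability measures on ℝ with finite second moments, with cumulative distribution functions F_P and F_Q and quantile functions q_P(p) = inf{x ∈ ℝ : F_P(x) ≥ p} and q_Q(p) = inf{x ∈ ℝ : F_Q(x) ≥ p} for p ∈ (0,1). Then the squared 2-Wasserstein distance satisfies d_W²(P,Q) = ∫_0^1 (q_P(p) − q_Q(p))² dp. -/
open MeasureTheory ProbabilityTheory Matrix
open scoped Classical ENNReal
open Set

/-- Squared 2-Wasserstein distance between Borel probability measures on ℝ: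
the infimum over couplings `γ` of `∫ |x − y|² dγ`. -/
noncomputable def W2sq (P Q : Measure ℝ) : ℝ :=
  sInf { r : ℝ | ∃ γ : Measure (ℝ × ℝ), IsProbabilityMeasure γ ∧
    γ.map Prod.fst = P ∧ γ.map Prod.snd = Q ∧ r = ∫ p, (p.1 - p.2) ^ 2 ∂γ }

/-- Cumulative distribution function of a measure on ℝ: `F_P(x) = P((−∞, x])`. -/
noncomputable def cdfOf (P : Measure ℝ) (x : ℝ) : ℝ := (P (Set.Iic x)).toReal

/-- Quantile function `q_P(p) = inf {x ∈ ℝ : F_P(x) ≥ p}`. -/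
noncomputable def quantileOf (P : Measure ℝ) (p : ℝ) : ℝ := sInf { x : ℝ | p ≤ cdfOf P x }

section basic
variable {P : Measure ℝ} [IsProbabilityMeasure P]

lemma cdf_nonneg (x : ℝ) : 0 ≤ cdfOf P x := ENNReal.toReal_nonneg

lemma cdf_le_one (x : ℝ) : cdfOf P x ≤ 1 := by
  rw [cdfOf, ← ENNReal.toReal_one]
  exact ENNReal.toReal_mono ENNReal.one_ne_top prob_le_one

lemma cdf_mono : Monotone (cdfOf P) := fun _ _ hab =>
  ENNReal.toReal_mono (measure_ne_top _ _) (measure_mono (Iic_subset_Iic.2 hab))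

lemma cdf_eq_ofReal (x : ℝ) : P (Set.Iic x) = ENNReal.ofReal (cdfOf P x) :=
  (ENNReal.ofReal_toReal (measure_ne_top _ _)).symm

lemma cdf_tendsto_atTop : Filter.Tendsto (cdfOf P) Filter.atTop (nhds 1) := by
  have h := tendsto_measure_Iic_atTop (μ := P)
  rw [measure_univ] at h
  have := (ENNReal.tendsto_toReal ENNReal.one_ne_top).comp h
  simp [Function.comp_def] at this
  exact this

lemma cdf_tendsto_atBot : Filter.Tendsto (cdfOf P) Filter.atBot (nhds 0) := by
  have h : Filter.Tendsto (fun x => P (Iic x)) Filter.atBot (nhds (P (⋂ x : ℝ, Iic x))) :=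
    tendsto_measure_iInter_atBot (fun i => (measurableSet_Iic).nullMeasurableSet)
      (fun _ _ hab => Iic_subset_Iic.2 hab) ⟨0, measure_ne_top _ _⟩
  have hempty : (⋂ x : ℝ, Iic x) = (∅ : Set ℝ) := by
    ext y; simp only [mem_iInter, mem_Iic, mem_empty_iff_false, iff_false, not_forall]
    exact ⟨y - 1, by simp [not_le]⟩
  rw [hempty, measure_empty] at h
  have := (ENNReal.tendsto_toReal ENNReal.zero_ne_top).comp h
  simp [Function.comp_def] at this
  exact this

lemma quantile_set_nonempty {p : ℝ} (hp1 : p < 1) : { x : ℝ | p ≤ cdfOf P x }.Nonempty := by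
  obtain ⟨x, hx⟩ := ((cdf_tendsto_atTop (P := P)).eventually (eventually_ge_nhds hp1)).exists
  exact ⟨x, hx⟩

lemma quantile_set_bddBelow {p : ℝ} (hp0 : 0 < p) : BddBelow { x : ℝ | p ≤ cdfOf P x } := by
  obtain ⟨z, hz⟩ := ((cdf_tendsto_atBot (P := P)).eventually (eventually_lt_nhds hp0)).exists
  refine ⟨z, fun y hy => ?_⟩
  by_contra hzy
  push_neg at hzy
  exact absurd (le_trans hy (cdf_mono hzy.le)) (not_le.2 hz)

lemma quantile_mem {p : ℝ} (hp0 : 0 < p) (hp1 : p < 1) : p ≤ cdfOf P (quantileOf P p) := by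
  have key : ∀ n : ℕ, p ≤ cdfOf P (quantileOf P p + 1/(n+1)) := by
    intro n
    have hpos : (0:ℝ) < 1/(n+1) := by positivity
    have : quantileOf P p < quantileOf P p + 1/(n+1) := by linarith
    obtain ⟨y, hy, hylt⟩ := exists_lt_of_csInf_lt (quantile_set_nonempty hp1) this
    exact le_trans hy (cdf_mono hylt.le)
  -- right continuity
  have hs : ∀ n : ℕ, NullMeasurableSet (Iic (quantileOf P p + 1/(n+1)) : Set ℝ) P :=
    fun n => measurableSet_Iic.nullMeasurableSet
  have hanti : Antitone (fun n : ℕ => (Iic (quantileOf P p + 1/(n+1)) : Set ℝ)) := by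
    intro m n hmn
    apply Iic_subset_Iic.2
    have hmn' : (m:ℝ) ≤ n := Nat.cast_le.mpr hmn
    have : (1:ℝ)/(n+1) ≤ 1/(m+1) := by
      apply one_div_le_one_div_of_le (by positivity)
      linarith
    linarith
  have hiInter : (⋂ n : ℕ, (Iic (quantileOf P p + 1/(n+1)) : Set ℝ)) = Iic (quantileOf P p) := by
    ext y
    simp only [mem_iInter, mem_Iic]
    constructor
    · intro h
      by_contra hlt
      push_neg at hlt
      obtain ⟨n, hn⟩ := exists_nat_one_div_lt (by linarith : (0:ℝ) < y - quantileOf P p)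
      have := h n
      linarith [hn]
    · intro h n
      have : (0:ℝ) < 1/(n+1) := by positivity
      linarith
  have htend := tendsto_measure_iInter_atTop hs hanti ⟨0, measure_ne_top _ _⟩
  rw [hiInter] at htend
  have htend' := (ENNReal.tendsto_toReal (measure_ne_top P _)).comp htend
  exact ge_of_tendsto' htend' (fun n => key n)

/-- Galois connection: for `p ∈ (0,1)`, `quantileOf P p ≤ x ↔ p ≤ cdfOf P x`. -/
lemma quantile_le_iff {p x : ℝ} (hp0 : 0 < p) (hp1 : p < 1) :
    quantileOf P p ≤ x ↔ p ≤ cdfOf P x := by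
  constructor
  · intro h
    exact le_trans (quantile_mem hp0 hp1) (cdf_mono h)
  · intro h
    exact csInf_le (quantile_set_bddBelow hp0) h

lemma lt_quantile_iff {p x : ℝ} (hp0 : 0 < p) (hp1 : p < 1) :
    x < quantileOf P p ↔ cdfOf P x < p := by
  rw [← not_le, ← not_le, quantile_le_iff hp0 hp1]

lemma quantile_monotoneOn : MonotoneOn (quantileOf P) (Ioo (0:ℝ) 1) := by
  intro a ha b hb hab
  exact csInf_le_csInf (quantile_set_bddBelow ha.1)
    (quantile_set_nonempty hb.2) (fun x hx => le_trans hab hx)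

end basic

section push
variable {P : Measure ℝ} [IsProbabilityMeasure P]

lemma quantile_aemeasurable : AEMeasurable (quantileOf P) (volume.restrict (Ioo (0:ℝ) 1)) :=
  aemeasurable_restrict_of_monotoneOn measurableSet_Ioo quantile_monotoneOn

lemma map_quantile : (volume.restrict (Ioo (0:ℝ) 1)).map (quantileOf P) = P := by
  refine Measure.ext_of_Iic _ P (fun x => ?_)
  rw [Measure.map_apply_of_aemeasurable (quantile_aemeasurable (P := P)) measurableSet_Iic,
    Measure.restrict_apply' measurableSet_Ioo]
  have hset : (quantileOf P ⁻¹' Iic x) ∩ Ioo 0 1 = Iic (cdfOf P x) ∩ Ioo 0 1 := by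
    ext p
    simp only [mem_inter_iff, mem_preimage, mem_Iic, mem_Ioo, and_congr_left_iff]
    intro hp
    exact quantile_le_iff hp.1 hp.2
  rw [hset, cdf_eq_ofReal (P := P) x]
  have h0 : 0 ≤ cdfOf P x := cdf_nonneg x
  rcases lt_or_eq_of_le (cdf_le_one (P := P) x) with h1 | h1
  · have : Iic (cdfOf P x) ∩ Ioo 0 1 = Ioc 0 (cdfOf P x) := by
      ext p
      simp only [mem_inter_iff, mem_Iic, mem_Ioo, mem_Ioc]
      constructor
      · rintro ⟨h, h', _⟩; exact ⟨h', h⟩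
      · rintro ⟨h, h'⟩; exact ⟨h', h, lt_of_le_of_lt h' h1⟩
    rw [this, Real.volume_Ioc]
    norm_num
  · have : Iic (cdfOf P x) ∩ Ioo 0 1 = Ioo 0 1 := by
      apply inter_eq_self_of_subset_right
      intro p hp
      simp only [mem_Iic]
      exact le_of_lt (h1 ▸ hp.2)
    rw [this, Real.volume_Ioo, ← h1]
    norm_num

lemma isProbabilityMeasure_mu01 : IsProbabilityMeasure (volume.restrict (Ioo (0:ℝ) 1)) := by
  constructor
  rw [Measure.restrict_apply' measurableSet_Ioo, univ_inter, Real.volume_Ioo]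
  norm_num

end push

noncomputable def eAux (s x : ℝ) : ℝ :=
  (if s < x then (1:ℝ) else 0) - (if s < 0 then (1:ℝ) else 0)

lemma eAux_eq (s x : ℝ) :
    eAux s x = (Ico (0:ℝ) x).indicator (fun _ => (1:ℝ)) s
      - (Ico x (0:ℝ)).indicator (fun _ => (1:ℝ)) s := by
  rcases le_or_gt 0 s with h | h <;> rcases le_or_gt x s with h' | h'
  · simp [eAux, Set.indicator_apply, mem_Ico, not_lt.mpr h, not_lt.mpr h']
  · simp [eAux, Set.indicator_apply, mem_Ico, h, h', not_lt.mpr h]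
  · simp [eAux, Set.indicator_apply, mem_Ico, h, h', not_lt.mpr h']
  · simp [eAux, Set.indicator_apply, mem_Ico, h, h', not_le.mpr h, not_le.mpr h']

lemma measurable_eAux : Measurable (fun w : ℝ × ℝ => eAux w.1 w.2) := by
  unfold eAux
  apply Measurable.sub
  · exact Measurable.ite (measurableSet_lt measurable_fst measurable_snd)
      measurable_const measurable_const
  · exact Measurable.ite (measurableSet_lt measurable_fst measurable_const)
      measurable_const measurable_const

lemma integrable_eAux (x : ℝ) : Integrable (fun s => eAux s x) volume := by
  have h1 : Integrable ((Ico (0:ℝ) x).indicator (fun _ => (1:ℝ))) volume := by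
    rw [integrable_indicator_iff measurableSet_Ico]
    exact integrableOn_const (by rw [Real.volume_Ico]; exact ENNReal.ofReal_ne_top)
  have h2 : Integrable ((Ico x (0:ℝ)).indicator (fun _ => (1:ℝ))) volume := by
    rw [integrable_indicator_iff measurableSet_Ico]
    exact integrableOn_const (by rw [Real.volume_Ico]; exact ENNReal.ofReal_ne_top)
  have := h1.sub h2
  apply this.congr
  filter_upwards with s
  rw [eAux_eq]
  rfl

lemma integral_ind_Ico_left (x : ℝ) :
    ∫ s, (Ico (0:ℝ) x).indicator (fun _ => (1:ℝ)) s = max x 0 := by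
  rw [MeasureTheory.integral_indicator_const (1:ℝ) measurableSet_Ico, measureReal_def, Real.volume_Ico]
  rcases le_total x 0 with h | h
  · rw [max_eq_right h, ENNReal.ofReal_of_nonpos (by linarith)]; simp
  · rw [max_eq_left h, smul_eq_mul, mul_one, ENNReal.toReal_ofReal (by linarith)]; ring

lemma integral_ind_Ico_right (x : ℝ) :
    ∫ s, (Ico x (0:ℝ)).indicator (fun _ => (1:ℝ)) s = max (-x) 0 := by
  rw [MeasureTheory.integral_indicator_const (1:ℝ) measurableSet_Ico, measureReal_def, Real.volume_Ico]
  rcases le_total x 0 with h | h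
  · rw [max_eq_left (by linarith : (0:ℝ) ≤ -x), smul_eq_mul, mul_one,
      ENNReal.toReal_ofReal (by linarith)]; ring
  · rw [max_eq_right (by linarith : -x ≤ (0:ℝ)), ENNReal.ofReal_of_nonpos (by linarith)]; simp

lemma integrable_ind_Ico (a b : ℝ) :
    Integrable ((Ico a b).indicator (fun _ => (1:ℝ))) volume := by
  rw [integrable_indicator_iff measurableSet_Ico]
  exact integrableOn_const (by rw [Real.volume_Ico]; exact ENNReal.ofReal_ne_top)

lemma integral_eAux (x : ℝ) : ∫ s, eAux s x = x := by
  calc ∫ s, eAux s x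
      = ∫ s, ((Ico (0:ℝ) x).indicator (fun _ => (1:ℝ)) s
          - (Ico x (0:ℝ)).indicator (fun _ => (1:ℝ)) s) := by
        congr 1; funext s; rw [eAux_eq]
    _ = (∫ s, (Ico (0:ℝ) x).indicator (fun _ => (1:ℝ)) s)
          - ∫ s, (Ico x (0:ℝ)).indicator (fun _ => (1:ℝ)) s :=
        integral_sub (integrable_ind_Ico _ _) (integrable_ind_Ico _ _)
    _ = max x 0 - max (-x) 0 := by rw [integral_ind_Ico_left, integral_ind_Ico_right]
    _ = x := by rcases le_total x 0 with h | h
                · rw [max_eq_right h, max_eq_left (by linarith : (0:ℝ) ≤ -x)]; ring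
                · rw [max_eq_left h, max_eq_right (by linarith : -x ≤ (0:ℝ))]; ring

lemma abs_eAux_eq (s x : ℝ) : |eAux s x| = (Ico (0:ℝ) x).indicator (fun _ => (1:ℝ)) s
    + (Ico x (0:ℝ)).indicator (fun _ => (1:ℝ)) s := by
  rw [eAux_eq]
  rcases le_or_gt 0 x with h | h
  · rw [Set.Ico_eq_empty (by linarith : ¬ x < 0)]
    simp only [Set.indicator_empty, Pi.zero_apply, sub_zero, add_zero]
    exact abs_of_nonneg (Set.indicator_nonneg (by norm_num) s)
  · rw [Set.Ico_eq_empty (by linarith : ¬ 0 < x)]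
    simp only [Set.indicator_empty, Pi.zero_apply, zero_sub, zero_add, abs_neg]
    exact abs_of_nonneg (Set.indicator_nonneg (by norm_num) s)

lemma integral_abs_eAux (x : ℝ) : ∫ s, |eAux s x| = |x| := by
  calc ∫ s, |eAux s x|
      = ∫ s, ((Ico (0:ℝ) x).indicator (fun _ => (1:ℝ)) s
          + (Ico x (0:ℝ)).indicator (fun _ => (1:ℝ)) s) := by
        congr 1; funext s; rw [abs_eAux_eq]
    _ = max x 0 + max (-x) 0 := by
        rw [integral_add (integrable_ind_Ico _ _) (integrable_ind_Ico _ _),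
          integral_ind_Ico_left, integral_ind_Ico_right]
    _ = |x| := by rcases le_total x 0 with h | h
                  · rw [max_eq_right h, max_eq_left (by linarith : (0:ℝ) ≤ -x), abs_of_nonpos h]; ring
                  · rw [max_eq_left h, max_eq_right (by linarith : -x ≤ (0:ℝ)), abs_of_nonneg h]; ring

lemma abs_eAux_le (s x : ℝ) : |eAux s x| ≤ 1 := by
  rw [abs_eAux_eq]
  rcases le_or_gt 0 x with h | h
  · rw [Set.Ico_eq_empty (by linarith : ¬ x < 0)]
    simp only [Set.indicator_empty, Pi.zero_apply, add_zero]
    exact Set.indicator_le_self' (by norm_num) s |>.trans (by norm_num) |>.trans (le_refl 1) |>.trans (le_refl 1)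
  · rw [Set.Ico_eq_empty (by linarith : ¬ 0 < x)]
    simp only [Set.indicator_empty, Pi.zero_apply, zero_add]
    exact Set.indicator_le_self' (by norm_num) s |>.trans (by norm_num)

section inner
variable {P Q : Measure ℝ} [IsProbabilityMeasure P] [IsProbabilityMeasure Q]

lemma rect_measurable (s t : ℝ) : MeasurableSet {ω : ℝ × ℝ | s < ω.1 ∧ t < ω.2} := by
  apply MeasurableSet.inter
  · exact measurableSet_lt measurable_const measurable_fst
  · exact measurableSet_lt measurable_const measurable_snd

lemma integrable_ind {γ : Measure (ℝ × ℝ)} [IsProbabilityMeasure γ] {A : Set (ℝ × ℝ)}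
    (hA : MeasurableSet A) : Integrable (A.indicator (fun _ => (1:ℝ))) γ := by
  rw [integrable_indicator_iff hA]
  exact integrableOn_const (measure_ne_top _ _)

lemma inner_integral (γ : Measure (ℝ × ℝ)) [IsProbabilityMeasure γ]
    (h1 : γ.map Prod.fst = P) (h2 : γ.map Prod.snd = Q) (s t : ℝ) :
    ∫ ω, eAux s ω.1 * eAux t ω.2 ∂γ
      = (γ {ω : ℝ × ℝ | s < ω.1 ∧ t < ω.2}).toReal
        - (if t < 0 then (1:ℝ) else 0) * (P (Ioi s)).toReal
        - (if s < 0 then (1:ℝ) else 0) * (Q (Ioi t)).toReal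
        + (if s < 0 then (1:ℝ) else 0) * (if t < 0 then (1:ℝ) else 0) := by
  set c1 : ℝ := if s < 0 then 1 else 0 with hc1
  set c2 : ℝ := if t < 0 then 1 else 0 with hc2
  set A : Set (ℝ × ℝ) := {ω | s < ω.1 ∧ t < ω.2} with hA
  set A1 : Set (ℝ × ℝ) := {ω | s < ω.1} with hA1
  set A2 : Set (ℝ × ℝ) := {ω | t < ω.2} with hA2
  have hAm : MeasurableSet A := rect_measurable s t
  have hA1m : MeasurableSet A1 := measurableSet_lt measurable_const measurable_fst
  have hA2m : MeasurableSet A2 := measurableSet_lt measurable_const measurable_snd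
  have key : (fun ω : ℝ × ℝ => eAux s ω.1 * eAux t ω.2) =
      fun ω => (A.indicator (fun _ => (1:ℝ)) ω - c2 * A1.indicator (fun _ => (1:ℝ)) ω)
        - (c1 * A2.indicator (fun _ => (1:ℝ)) ω - c1 * c2) := by
    funext ω
    simp only [eAux, Set.indicator_apply, hA, hA1, hA2, mem_setOf_eq, hc1, hc2]
    by_cases hx : s < ω.1 <;> by_cases hy : t < ω.2 <;> by_cases hs0 : s < 0 <;>
      by_cases ht0 : t < 0 <;> simp [hx, hy, hs0, ht0]
  rw [key]
  have i1 : Integrable (A.indicator (fun _ => (1:ℝ))) γ := integrable_ind hAm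
  have i2 : Integrable (fun ω => c2 * A1.indicator (fun _ => (1:ℝ)) ω) γ :=
    (integrable_ind hA1m).const_mul c2
  have i3 : Integrable (fun ω => c1 * A2.indicator (fun _ => (1:ℝ)) ω) γ :=
    (integrable_ind hA2m).const_mul c1
  have i4 : Integrable (fun _ : ℝ × ℝ => c1 * c2) γ := integrable_const _
  have e1 : γ A1 = P (Ioi s) := by
    rw [← h1, Measure.map_apply measurable_fst measurableSet_Ioi]; rfl
  have e2 : γ A2 = Q (Ioi t) := by
    rw [← h2, Measure.map_apply measurable_snd measurableSet_Ioi]; rfl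
  calc ∫ ω, (A.indicator (fun _ => (1:ℝ)) ω - c2 * A1.indicator (fun _ => (1:ℝ)) ω
        - (c1 * A2.indicator (fun _ => (1:ℝ)) ω - c1 * c2)) ∂γ
      = (∫ ω, (A.indicator (fun _ => (1:ℝ)) ω - c2 * A1.indicator (fun _ => (1:ℝ)) ω) ∂γ)
        - ∫ ω, (c1 * A2.indicator (fun _ => (1:ℝ)) ω - c1 * c2) ∂γ :=
        integral_sub (i1.sub i2) (i3.sub i4)
    _ = ((∫ ω, A.indicator (fun _ => (1:ℝ)) ω ∂γ)
          - ∫ ω, c2 * A1.indicator (fun _ => (1:ℝ)) ω ∂γ)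
        - ((∫ ω, c1 * A2.indicator (fun _ => (1:ℝ)) ω ∂γ) - ∫ _ω, c1 * c2 ∂γ) := by
        rw [integral_sub i1 i2, integral_sub i3 i4]
    _ = (γ A).toReal - c2 * (P (Ioi s)).toReal - c1 * (Q (Ioi t)).toReal + c1 * c2 := by
        rw [MeasureTheory.integral_const_mul, MeasureTheory.integral_const_mul, integral_const,
          MeasureTheory.integral_indicator_const (1:ℝ) hAm,
          MeasureTheory.integral_indicator_const (1:ℝ) hA1m,
          MeasureTheory.integral_indicator_const (1:ℝ) hA2m]
        simp only [measureReal_def]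
        rw [e1, e2]
        simp [measure_univ]
        ring

end inner

noncomputable def qcoupling (P Q : Measure ℝ) : Measure (ℝ × ℝ) :=
  (volume.restrict (Ioo (0:ℝ) 1)).map (fun p => (quantileOf P p, quantileOf Q p))

section qc
variable {P Q : Measure ℝ} [IsProbabilityMeasure P] [IsProbabilityMeasure Q]

lemma P_Ioi (s : ℝ) : P (Ioi s) = ENNReal.ofReal (1 - cdfOf P s) := by
  rw [← compl_Iic, measure_compl measurableSet_Iic (measure_ne_top _ _), measure_univ,
    cdf_eq_ofReal (P := P) s, ← ENNReal.ofReal_one, ← ENNReal.ofReal_sub _ (cdf_nonneg s)]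

lemma qpair_aemeasurable :
    AEMeasurable (fun p => (quantileOf P p, quantileOf Q p)) (volume.restrict (Ioo (0:ℝ) 1)) :=
  AEMeasurable.prodMk quantile_aemeasurable quantile_aemeasurable

lemma qcoupling_isProb : IsProbabilityMeasure (qcoupling P Q) := by
  haveI := isProbabilityMeasure_mu01
  exact Measure.isProbabilityMeasure_map (qpair_aemeasurable (P := P) (Q := Q))

lemma qcoupling_fst : (qcoupling P Q).map Prod.fst = P := by
  rw [qcoupling, AEMeasurable.map_map_of_aemeasurable measurable_fst.aemeasurable qpair_aemeasurable]
  exact map_quantile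

lemma qcoupling_snd : (qcoupling P Q).map Prod.snd = Q := by
  rw [qcoupling, AEMeasurable.map_map_of_aemeasurable measurable_snd.aemeasurable qpair_aemeasurable]
  exact map_quantile

lemma qcoupling_rect (s t : ℝ) :
    qcoupling P Q {ω : ℝ × ℝ | s < ω.1 ∧ t < ω.2} = min (P (Ioi s)) (Q (Ioi t)) := by
  rw [qcoupling, Measure.map_apply_of_aemeasurable qpair_aemeasurable (rect_measurable s t),
    Measure.restrict_apply' measurableSet_Ioo]
  set F1 := cdfOf P s with hF1
  set F2 := cdfOf Q t with hF2
  have hF1n : 0 ≤ F1 := cdf_nonneg s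
  have hF2n : 0 ≤ F2 := cdf_nonneg t
  have hF1le : F1 ≤ 1 := cdf_le_one s
  have hF2le : F2 ≤ 1 := cdf_le_one t
  have hset : ((fun p => (quantileOf P p, quantileOf Q p)) ⁻¹' {ω : ℝ × ℝ | s < ω.1 ∧ t < ω.2})
      ∩ Ioo 0 1 = Ioo (max F1 F2) 1 := by
    ext p
    simp only [mem_inter_iff, mem_preimage, mem_setOf_eq, mem_Ioo, max_lt_iff]
    constructor
    · rintro ⟨⟨h1, h2⟩, hp0, hp1⟩
      exact ⟨⟨(lt_quantile_iff hp0 hp1).mp h1, (lt_quantile_iff hp0 hp1).mp h2⟩, hp1⟩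
    · rintro ⟨⟨h1, h2⟩, hp1⟩
      have hp0 : 0 < p := lt_of_le_of_lt hF1n h1
      exact ⟨⟨(lt_quantile_iff hp0 hp1).mpr h1, (lt_quantile_iff hp0 hp1).mpr h2⟩, hp0, hp1⟩
  rw [hset, Real.volume_Ioo, P_Ioi, P_Ioi, ← hF1, ← hF2]
  rcases le_total F1 F2 with h | h
  · rw [max_eq_right h, min_eq_right (ENNReal.ofReal_le_ofReal (by linarith))]
  · rw [max_eq_left h, min_eq_left (ENNReal.ofReal_le_ofReal (by linarith))]

lemma coupling_rect_le (γ : Measure (ℝ × ℝ))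
    (h1 : γ.map Prod.fst = P) (h2 : γ.map Prod.snd = Q) (s t : ℝ) :
    γ {ω : ℝ × ℝ | s < ω.1 ∧ t < ω.2} ≤ min (P (Ioi s)) (Q (Ioi t)) := by
  apply le_min
  · rw [← h1, Measure.map_apply measurable_fst measurableSet_Ioi]
    exact measure_mono (fun ω hω => hω.1)
  · rw [← h2, Measure.map_apply measurable_snd measurableSet_Ioi]
    exact measure_mono (fun ω hω => hω.2)

lemma inner_le (γ : Measure (ℝ × ℝ)) [IsProbabilityMeasure γ]
    (h1 : γ.map Prod.fst = P) (h2 : γ.map Prod.snd = Q) (z : ℝ × ℝ) :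
    ∫ ω, eAux z.1 ω.1 * eAux z.2 ω.2 ∂γ
      ≤ ∫ ω, eAux z.1 ω.1 * eAux z.2 ω.2 ∂(qcoupling P Q) := by
  haveI := qcoupling_isProb (P := P) (Q := Q)
  rw [inner_integral γ h1 h2 z.1 z.2,
    inner_integral (qcoupling P Q) qcoupling_fst qcoupling_snd z.1 z.2]
  apply add_le_add_left
  apply sub_le_sub_right
  apply sub_le_sub_right
  apply ENNReal.toReal_mono (measure_ne_top _ _)
  rw [qcoupling_rect]
  exact coupling_rect_le γ h1 h2 z.1 z.2

end qc

section fubini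
variable {P Q : Measure ℝ} [IsProbabilityMeasure P] [IsProbabilityMeasure Q]

lemma integrable_fst_sq {γ : Measure (ℝ × ℝ)} (h1 : γ.map Prod.fst = P)
    (hP : Integrable (fun x => x ^ 2) P) : Integrable (fun ω : ℝ × ℝ => ω.1 ^ 2) γ := by
  rw [← h1] at hP
  exact (integrable_map_measure (measurable_id.pow_const 2).aestronglyMeasurable
    measurable_fst.aemeasurable).mp hP

lemma integrable_snd_sq {γ : Measure (ℝ × ℝ)} (h2 : γ.map Prod.snd = Q)
    (hQ : Integrable (fun x => x ^ 2) Q) : Integrable (fun ω : ℝ × ℝ => ω.2 ^ 2) γ := by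
  rw [← h2] at hQ
  exact (integrable_map_measure (measurable_id.pow_const 2).aestronglyMeasurable
    measurable_snd.aemeasurable).mp hQ

lemma integrable_abs_mul {γ : Measure (ℝ × ℝ)} [IsProbabilityMeasure γ]
    (hs1 : Integrable (fun ω : ℝ × ℝ => ω.1 ^ 2) γ)
    (hs2 : Integrable (fun ω : ℝ × ℝ => ω.2 ^ 2) γ) :
    Integrable (fun ω : ℝ × ℝ => |ω.1| * |ω.2|) γ := by
  apply Integrable.mono' (((hs1.add hs2).div_const 2))
    ((measurable_fst.abs.mul measurable_snd.abs).aestronglyMeasurable)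
  filter_upwards with ω
  simp only [Real.norm_eq_abs, Pi.add_apply, Pi.mul_apply, abs_mul, abs_abs]
  nlinarith [sq_nonneg (|ω.1| - |ω.2|), sq_abs ω.1, sq_abs ω.2]

lemma integrable_mul_coupling {γ : Measure (ℝ × ℝ)} [IsProbabilityMeasure γ]
    (hs1 : Integrable (fun ω : ℝ × ℝ => ω.1 ^ 2) γ)
    (hs2 : Integrable (fun ω : ℝ × ℝ => ω.2 ^ 2) γ) :
    Integrable (fun ω : ℝ × ℝ => ω.1 * ω.2) γ := by
  apply Integrable.mono' (integrable_abs_mul hs1 hs2)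
    ((measurable_fst.mul measurable_snd).aestronglyMeasurable)
  filter_upwards with ω
  rw [Real.norm_eq_abs, Pi.mul_apply, abs_mul]

lemma integrable_uncurry_eAux {γ : Measure (ℝ × ℝ)} [IsProbabilityMeasure γ]
    (hs1 : Integrable (fun ω : ℝ × ℝ => ω.1 ^ 2) γ)
    (hs2 : Integrable (fun ω : ℝ × ℝ => ω.2 ^ 2) γ) :
    Integrable (Function.uncurry fun (ω : ℝ × ℝ) (z : ℝ × ℝ) => eAux z.1 ω.1 * eAux z.2 ω.2)
      (γ.prod (volume.prod volume)) := by
  have m1 : Measurable fun p : (ℝ × ℝ) × (ℝ × ℝ) => eAux p.2.1 p.1.1 :=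
    measurable_eAux.comp ((measurable_fst.comp measurable_snd).prodMk
      (measurable_fst.comp measurable_fst))
  have m2 : Measurable fun p : (ℝ × ℝ) × (ℝ × ℝ) => eAux p.2.2 p.1.2 :=
    measurable_eAux.comp ((measurable_snd.comp measurable_snd).prodMk
      (measurable_snd.comp measurable_fst))
  have hmeas : AEStronglyMeasurable
      (Function.uncurry fun (ω : ℝ × ℝ) (z : ℝ × ℝ) => eAux z.1 ω.1 * eAux z.2 ω.2)
      (γ.prod (volume.prod volume)) := (m1.mul m2).aestronglyMeasurable
  rw [integrable_prod_iff hmeas]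
  constructor
  · filter_upwards with ω
    exact (integrable_eAux ω.1).mul_prod (integrable_eAux ω.2)
  · have key : ∀ ω : ℝ × ℝ,
        (∫ z : ℝ × ℝ, ‖eAux z.1 ω.1 * eAux z.2 ω.2‖ ∂(volume.prod volume)) = |ω.1| * |ω.2| := by
      intro ω
      have : ∀ z : ℝ × ℝ, ‖eAux z.1 ω.1 * eAux z.2 ω.2‖ = |eAux z.1 ω.1| * |eAux z.2 ω.2| := by
        intro z; rw [Real.norm_eq_abs, abs_mul]
      rw [integral_congr_ae (Filter.Eventually.of_forall this),
        integral_prod_mul (fun s => |eAux s ω.1|) (fun t => |eAux t ω.2|),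
        integral_abs_eAux, integral_abs_eAux]
    apply (integrable_abs_mul hs1 hs2).congr
    filter_upwards with ω
    exact (key ω).symm

lemma integral_mul_eq_fubini {γ : Measure (ℝ × ℝ)} [IsProbabilityMeasure γ]
    (hs1 : Integrable (fun ω : ℝ × ℝ => ω.1 ^ 2) γ)
    (hs2 : Integrable (fun ω : ℝ × ℝ => ω.2 ^ 2) γ) :
    ∫ ω, ω.1 * ω.2 ∂γ
      = ∫ z, (∫ ω, eAux z.1 ω.1 * eAux z.2 ω.2 ∂γ) ∂(volume.prod volume) := by
  calc ∫ ω, ω.1 * ω.2 ∂γ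
      = ∫ ω, (∫ z : ℝ × ℝ, eAux z.1 ω.1 * eAux z.2 ω.2 ∂(volume.prod volume)) ∂γ := by
        congr 1; funext ω
        rw [integral_prod_mul (fun s => eAux s ω.1) (fun t => eAux t ω.2),
          integral_eAux, integral_eAux]
    _ = ∫ z, (∫ ω, eAux z.1 ω.1 * eAux z.2 ω.2 ∂γ) ∂(volume.prod volume) :=
        integral_integral_swap (integrable_uncurry_eAux hs1 hs2)

lemma mul_integral_le (γ : Measure (ℝ × ℝ)) [IsProbabilityMeasure γ]
    (h1 : γ.map Prod.fst = P) (h2 : γ.map Prod.snd = Q)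
    (hP : Integrable (fun x => x ^ 2) P) (hQ : Integrable (fun x => x ^ 2) Q) :
    ∫ ω, ω.1 * ω.2 ∂γ ≤ ∫ ω, ω.1 * ω.2 ∂(qcoupling P Q) := by
  haveI := qcoupling_isProb (P := P) (Q := Q)
  have hs1 := integrable_fst_sq h1 hP
  have hs2 := integrable_snd_sq h2 hQ
  have hs1' := integrable_fst_sq (qcoupling_fst (P := P) (Q := Q)) hP
  have hs2' := integrable_snd_sq (qcoupling_snd (P := P) (Q := Q)) hQ
  rw [integral_mul_eq_fubini hs1 hs2, integral_mul_eq_fubini hs1' hs2']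
  apply integral_mono
  · exact (integrable_uncurry_eAux hs1 hs2).integral_prod_right
  · exact (integrable_uncurry_eAux hs1' hs2').integral_prod_right
  · intro z
    exact inner_le γ h1 h2 z

end fubini

section assemble
variable {P Q : Measure ℝ} [IsProbabilityMeasure P] [IsProbabilityMeasure Q]

lemma integral_fst_sq {γ : Measure (ℝ × ℝ)} (h1 : γ.map Prod.fst = P) :
    ∫ ω : ℝ × ℝ, ω.1 ^ 2 ∂γ = ∫ x, x ^ 2 ∂P := by
  rw [← h1]
  exact (integral_map (f := fun x : ℝ => x ^ 2) measurable_fst.aemeasurable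
    (measurable_id.pow_const 2).aestronglyMeasurable).symm

lemma integral_snd_sq {γ : Measure (ℝ × ℝ)} (h2 : γ.map Prod.snd = Q) :
    ∫ ω : ℝ × ℝ, ω.2 ^ 2 ∂γ = ∫ x, x ^ 2 ∂Q := by
  rw [← h2]
  exact (integral_map (f := fun x : ℝ => x ^ 2) measurable_snd.aemeasurable
    (measurable_id.pow_const 2).aestronglyMeasurable).symm

lemma sq_expand (γ : Measure (ℝ × ℝ)) [IsProbabilityMeasure γ]
    (hs1 : Integrable (fun ω : ℝ × ℝ => ω.1 ^ 2) γ)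
    (hs2 : Integrable (fun ω : ℝ × ℝ => ω.2 ^ 2) γ) :
    ∫ ω, (ω.1 - ω.2) ^ 2 ∂γ
      = (∫ ω : ℝ × ℝ, ω.1 ^ 2 ∂γ) - 2 * (∫ ω : ℝ × ℝ, ω.1 * ω.2 ∂γ)
        + ∫ ω : ℝ × ℝ, ω.2 ^ 2 ∂γ := by
  have hmul := integrable_mul_coupling hs1 hs2
  calc ∫ ω, (ω.1 - ω.2) ^ 2 ∂γ
      = ∫ ω : ℝ × ℝ, (ω.1 ^ 2 - 2 * (ω.1 * ω.2) + ω.2 ^ 2) ∂γ := by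
        congr 1; funext ω; ring
    _ = (∫ ω : ℝ × ℝ, (ω.1 ^ 2 - 2 * (ω.1 * ω.2)) ∂γ) + ∫ ω : ℝ × ℝ, ω.2 ^ 2 ∂γ :=
        integral_add (hs1.sub (hmul.const_mul 2)) hs2
    _ = (∫ ω : ℝ × ℝ, ω.1 ^ 2 ∂γ) - (∫ ω : ℝ × ℝ, 2 * (ω.1 * ω.2) ∂γ)
        + ∫ ω : ℝ × ℝ, ω.2 ^ 2 ∂γ := by
        rw [integral_sub hs1 (hmul.const_mul 2)]
    _ = _ := by rw [MeasureTheory.integral_const_mul]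

lemma cost_ge (γ : Measure (ℝ × ℝ)) [IsProbabilityMeasure γ]
    (h1 : γ.map Prod.fst = P) (h2 : γ.map Prod.snd = Q)
    (hP : Integrable (fun x => x ^ 2) P) (hQ : Integrable (fun x => x ^ 2) Q) :
    ∫ ω, (ω.1 - ω.2) ^ 2 ∂(qcoupling P Q) ≤ ∫ ω, (ω.1 - ω.2) ^ 2 ∂γ := by
  haveI := qcoupling_isProb (P := P) (Q := Q)
  have hs1 := integrable_fst_sq h1 hP
  have hs2 := integrable_snd_sq h2 hQ
  have hs1' := integrable_fst_sq (qcoupling_fst (P := P) (Q := Q)) hP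
  have hs2' := integrable_snd_sq (qcoupling_snd (P := P) (Q := Q)) hQ
  rw [sq_expand γ hs1 hs2, sq_expand (qcoupling P Q) hs1' hs2',
    integral_fst_sq h1, integral_snd_sq h2,
    integral_fst_sq (qcoupling_fst (P := P) (Q := Q)),
    integral_snd_sq (qcoupling_snd (P := P) (Q := Q))]
  have := mul_integral_le γ h1 h2 hP hQ
  linarith

theorem stmt5' (hP : Integrable (fun x => x ^ 2) P) (hQ : Integrable (fun x => x ^ 2) Q) :
    W2sq P Q = ∫ p in (0:ℝ)..1, (quantileOf P p - quantileOf Q p) ^ 2 := by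
  haveI := qcoupling_isProb (P := P) (Q := Q)
  set S := { r : ℝ | ∃ γ : Measure (ℝ × ℝ), IsProbabilityMeasure γ ∧
    γ.map Prod.fst = P ∧ γ.map Prod.snd = Q ∧ r = ∫ p, (p.1 - p.2) ^ 2 ∂γ } with hS
  have memV : (∫ ω, (ω.1 - ω.2) ^ 2 ∂(qcoupling P Q)) ∈ S :=
    ⟨qcoupling P Q, qcoupling_isProb, qcoupling_fst, qcoupling_snd, rfl⟩
  have hlb : ∀ r ∈ S, (∫ ω, (ω.1 - ω.2) ^ 2 ∂(qcoupling P Q)) ≤ r := by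
    rintro r ⟨γ, hγ, h1, h2, rfl⟩
    haveI := hγ
    exact cost_ge γ h1 h2 hP hQ
  have hbdd : BddBelow S := ⟨∫ ω, (ω.1 - ω.2) ^ 2 ∂(qcoupling P Q), fun r hr => hlb r hr⟩
  have hW : W2sq P Q = ∫ ω, (ω.1 - ω.2) ^ 2 ∂(qcoupling P Q) := by
    rw [W2sq, ← hS]
    exact le_antisymm (csInf_le hbdd memV) (le_csInf ⟨_, memV⟩ hlb)
  rw [hW, intervalIntegral.integral_of_le zero_le_one, integral_Ioc_eq_integral_Ioo]
  rw [qcoupling, integral_map (f := fun ω : ℝ × ℝ => (ω.1 - ω.2) ^ 2) qpair_aemeasurable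
    ((measurable_fst.sub measurable_snd).pow_const 2).aestronglyMeasurable]

end assemble

/-- for Borel probability measures on ℝ with finite second moments,
`d_W²(P,Q) = ∫_0^1 (q_P(p) − q_Q(p))² dp`. -/
theorem stmt5 (P Q : Measure ℝ) [IsProbabilityMeasure P] [IsProbabilityMeasure Q]
    (hP : Integrable (fun x => x ^ 2) P) (hQ : Integrable (fun x => x ^ 2) Q) :
    W2sq P Q = ∫ p in (0:ℝ)..1, (quantileOf P p - quantileOf Q p) ^ 2 := by
  exact stmt5' hP hQ
end
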